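/- arXiv:2301.13677 — 4 statements merged into one kernel-verified Lean document; each statement's English description precedes it below -/
import Mathlib

section
/- Let B_r(0) ⊂ ℝ² be the open ball of radius r > 0 centered at the origin, and let ψ be continuous on ℝ² \ B_r(0), twice continuously differentiable on the complement of the closed ball, bounded from below, and satisfy Δψ ≤ 0 on ℝ² \ cl(B_r(0)). Then ψ attains its infimum over ℝ² \ B_r(0) at some point of the boundary circle ∂B_r(0); i.e., ψ(x) ≥ min_{|y|=r} ψ(y) for all |x| ≥ r. -/
open Real MeasureTheory Filter Set

noncomputable def lap {n : ℕ} (f : EuclideanSpace ℝ (Fin n) → ℝ) (x : EuclideanSpace ℝ (Fin n)) : ℝ :=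
  ∑ i : Fin n, iteratedFDeriv ℝ 2 f x ![EuclideanSpace.single i 1, EuclideanSpace.single i 1]

open Topology

set_option synthInstance.maxHeartbeats 1000000
set_option maxHeartbeats 1000000

section Helpers

/-- 1D second derivative test at a local minimum. -/
lemma sdt1 (g g' : ℝ → ℝ) (c : ℝ) (hg : ∀ᶠ t in 𝓝 (0:ℝ), HasDerivAt g (g' t) t)
    (hg' : HasDerivAt g' c 0) (hmin : IsLocalMin g 0) : 0 ≤ c := by
  by_contra hc
  push_neg at hc
  have h0 : g' 0 = 0 := by
    have h := hmin.deriv_eq_zero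
    rwa [hg.self_of_nhds.deriv] at h
  have hslope : Tendsto (fun t => g' t / t) (𝓝[>] (0:ℝ)) (𝓝 c) := by
    have h := hasDerivAt_iff_tendsto_slope.mp hg'
    have h2 := h.mono_left (nhdsWithin_mono _ (fun t ht => ne_of_gt ht : Ioi (0:ℝ) ⊆ {(0:ℝ)}ᶜ))
    refine h2.congr (fun t => ?_)
    simp [slope, h0, div_eq_inv_mul]
  have hneg : ∀ᶠ t in 𝓝[>] (0:ℝ), g' t < 0 := by
    have h1 : ∀ᶠ t in 𝓝[>] (0:ℝ), g' t / t < c / 2 :=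
      hslope.eventually_lt_const (by linarith)
    filter_upwards [h1, self_mem_nhdsWithin] with t ht ht0
    have ht0' : (0:ℝ) < t := ht0
    have : g' t / t < 0 := lt_of_lt_of_le ht (by linarith)
    nlinarith [(div_lt_iff₀ ht0').mp this]
  obtain ⟨u, hu, hIoo⟩ := mem_nhdsGT_iff_exists_Ioo_subset.mp hneg
  have hgm : ∀ᶠ t in 𝓝 (0:ℝ), HasDerivAt g (g' t) t ∧ g 0 ≤ g t := hg.and hmin
  obtain ⟨δ, hδ, hδball⟩ := Metric.eventually_nhds_iff_ball.mp hgm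
  set t := min (δ/2) ((u)/2) with ht_def
  have hu0 : (0:ℝ) < u := hu
  have ht0 : 0 < t := lt_min (by linarith) (by linarith)
  have htδ : t < δ := lt_of_le_of_lt (min_le_left _ _) (by linarith)
  have htu : t < u := lt_of_le_of_lt (min_le_right _ _) (by linarith)
  have hcont : ContinuousOn g (Icc 0 t) := by
    intro s hs
    have : HasDerivAt g (g' s) s := by
      refine (hδball s ?_).1
      simp only [Metric.mem_ball, Real.dist_eq, sub_zero]
      rw [abs_of_nonneg hs.1]; exact lt_of_le_of_lt hs.2 htδ
    exact this.continuousAt.continuousWithinAt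
  have hderiv : ∀ s ∈ Ioo (0:ℝ) t, HasDerivAt g (g' s) s := by
    intro s hs
    refine (hδball s ?_).1
    simp only [Metric.mem_ball, Real.dist_eq, sub_zero]
    rw [abs_of_nonneg hs.1.le]; exact lt_trans hs.2 htδ
  obtain ⟨ξ, hξ, hξ'⟩ := exists_hasDerivAt_eq_slope g g' ht0 hcont hderiv
  have hgt : g 0 ≤ g t := by
    refine (hδball t ?_).2
    simp only [Metric.mem_ball, Real.dist_eq, sub_zero]
    rw [abs_of_nonneg ht0.le]; exact htδ
  have hξneg : g' ξ < 0 := hIoo ⟨hξ.1, lt_trans hξ.2 htu⟩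
  rw [hξ'] at hξneg
  have : 0 ≤ (g t - g 0) / (t - 0) := div_nonneg (by linarith) (by linarith)
  linarith

variable {E : Type*} [NormedAddCommGroup E] [NormedSpace ℝ E]

/-- Second derivative test at a local minimum, along direction `v`. -/
lemma sdt (f : E → ℝ) (U : Set E) (hU : IsOpen U) (x : E) (hx : x ∈ U)
    (hf : ContDiffOn ℝ 2 f U) (hmin : IsLocalMin f x) (v : E) :
    0 ≤ fderiv ℝ (fderiv ℝ f) x v v := by
  set ℓ : ℝ → E := fun t => x + t • v with hℓdef
  have hℓ : ∀ t : ℝ, HasDerivAt ℓ v t := by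
    intro t
    have h1 : HasDerivAt (fun t : ℝ => t • v) ((1:ℝ) • v) t := (hasDerivAt_id t).smul_const v
    simpa only [one_smul] using h1.const_add x
  have hℓc : Continuous ℓ := by continuity
  have hℓ0 : ℓ 0 = x := by simp [hℓdef]
  have hev : ∀ᶠ t in 𝓝 (0:ℝ), ℓ t ∈ U := by
    have : Tendsto ℓ (𝓝 0) (𝓝 x) := by
      rw [← hℓ0]; exact hℓc.continuousAt
    exact this.eventually (hU.mem_nhds hx)
  have hg : ∀ᶠ t in 𝓝 (0:ℝ), HasDerivAt (f ∘ ℓ) (fderiv ℝ f (ℓ t) v) t := by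
    filter_upwards [hev] with t ht
    have hdiff : DifferentiableAt ℝ f (ℓ t) :=
      (hf.contDiffAt (hU.mem_nhds ht)).differentiableAt two_ne_zero
    exact hdiff.hasFDerivAt.comp_hasDerivAt t (hℓ t)
  have hdf : ContDiffAt ℝ 1 (fderiv ℝ f) x :=
    (hf.contDiffAt (hU.mem_nhds hx)).fderiv_right (le_refl 2)
  have h1 : HasFDerivAt (fderiv ℝ f) (fderiv ℝ (fderiv ℝ f) x) x :=
    (hdf.differentiableAt one_ne_zero).hasFDerivAt
  have h2 : HasDerivAt (fun t => fderiv ℝ f (ℓ t)) (fderiv ℝ (fderiv ℝ f) x v) 0 := by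
    rw [← hℓ0] at h1
    have := h1.comp_hasDerivAt (x := (0:ℝ)) (hℓ 0)
    simp only [hℓ0] at this
    exact this
  have h3 : HasDerivAt (fun t => fderiv ℝ f (ℓ t) v) (fderiv ℝ (fderiv ℝ f) x v v) 0 := by
    have := h2.clm_apply (hasDerivAt_const (0:ℝ) v)
    simpa using this
  have hminℓ : IsLocalMin (f ∘ ℓ) 0 := by
    have ht : Tendsto ℓ (𝓝 (0:ℝ)) (𝓝 x) := by rw [← hℓ0]; exact hℓc.continuousAt
    have : IsMinFilter f (𝓝 x) (ℓ 0) := by rw [hℓ0]; exact hmin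
    exact this.comp_tendsto ht
  exact sdt1 (f ∘ ℓ) (fun t => fderiv ℝ f (ℓ t) v) _ hg h3 hminℓ

end Helpers

noncomputable section Barrier

abbrev E2 := EuclideanSpace ℝ (Fin 2)

def pr (i : Fin 2) : E2 →L[ℝ] ℝ := EuclideanSpace.proj i

def sq2 : E2 → ℝ := fun y => y 0 * y 0 + y 1 * y 1

def Ds (y : E2) : E2 →L[ℝ] ℝ := (2 * y 0) • pr 0 + (2 * y 1) • pr 1

def Dsder : E2 →L[ℝ] E2 →L[ℝ] ℝ :=
  ((2:ℝ) • pr 0).smulRight (pr 0) + ((2:ℝ) • pr 1).smulRight (pr 1)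

def bfun (a δ : ℝ) : E2 → ℝ := fun y => a * Real.log (sq2 y) - δ * sq2 y

def Db (a δ : ℝ) (y : E2) : E2 →L[ℝ] ℝ := (a / sq2 y - δ) • Ds y

def DDb (a δ : ℝ) (y : E2) : E2 →L[ℝ] E2 →L[ℝ] ℝ :=
  (a / sq2 y - δ) • Dsder + ((-(a / (sq2 y)^2)) • Ds y).smulRight (Ds y)

lemma sq2_eq_norm (y : E2) : sq2 y = ‖y‖ ^ 2 := by
  rw [EuclideanSpace.norm_eq, Real.sq_sqrt (by positivity)]
  simp [sq2, Fin.sum_univ_two, sq]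

lemma hasFDerivAt_pr (i : Fin 2) (y : E2) : HasFDerivAt (fun y : E2 => y i) (pr i) y :=
  (pr i).hasFDerivAt

lemma hasFDerivAt_sq2 (y : E2) : HasFDerivAt sq2 (Ds y) y := by
  have h := ((hasFDerivAt_pr 0 y).mul (hasFDerivAt_pr 0 y)).add
    ((hasFDerivAt_pr 1 y).mul (hasFDerivAt_pr 1 y))
  refine h.congr_fderiv ?_
  ext z
  simp [Ds, pr]
  ring

lemma hasFDerivAt_bfun (a δ : ℝ) (y : E2) (hy : sq2 y ≠ 0) :
    HasFDerivAt (bfun a δ) (Db a δ y) y := by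
  have hs := hasFDerivAt_sq2 y
  have hlog : HasDerivAt Real.log (sq2 y)⁻¹ (sq2 y) := Real.hasDerivAt_log hy
  have h1 : HasFDerivAt (fun y => Real.log (sq2 y)) ((sq2 y)⁻¹ • Ds y) y :=
    hlog.comp_hasFDerivAt y hs
  have h2 := (h1.const_mul a).sub (hs.const_mul δ)
  refine h2.congr_fderiv ?_
  ext z
  simp [Db]
  field_simp

lemma hasFDerivAt_Db (a δ : ℝ) (y : E2) (hy : sq2 y ≠ 0) :
    HasFDerivAt (Db a δ) (DDb a δ y) y := by
  have hs := hasFDerivAt_sq2 y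
  have hc : HasFDerivAt (fun y => a / sq2 y - δ) ((-(a / (sq2 y)^2)) • Ds y) y := by
    have hinv : HasDerivAt (fun t : ℝ => t⁻¹) (-((sq2 y)^2)⁻¹) (sq2 y) := hasDerivAt_inv hy
    have h1 := ((hinv.comp_hasFDerivAt y hs).const_mul a).sub_const δ
    refine h1.congr_fderiv ?_
    ext z
    simp
    try field_simp
    try ring
  have hDs : HasFDerivAt Ds Dsder y := by
    have h0 : HasFDerivAt (fun y : E2 => (2 * y 0) • pr 0)
        ((2 * y 0) • (0 : E2 →L[ℝ] E2 →L[ℝ] ℝ) + ((2:ℝ) • pr 0).smulRight (pr 0)) y :=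
      HasFDerivAt.smul ((hasFDerivAt_pr 0 y).const_mul 2) (hasFDerivAt_const (pr 0) y)
    have h1 : HasFDerivAt (fun y : E2 => (2 * y 1) • pr 1)
        ((2 * y 1) • (0 : E2 →L[ℝ] E2 →L[ℝ] ℝ) + ((2:ℝ) • pr 1).smulRight (pr 1)) y :=
      HasFDerivAt.smul ((hasFDerivAt_pr 1 y).const_mul 2) (hasFDerivAt_const (pr 1) y)
    have h := h0.add h1
    refine h.congr_fderiv ?_
    ext z w
    simp [Dsder]
  have h := hc.smul hDs
  exact h

lemma trace_DDb (a δ : ℝ) (y : E2) (hy : sq2 y ≠ 0) :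
    ∑ i : Fin 2, DDb a δ y (EuclideanSpace.single i 1) (EuclideanSpace.single i 1) = -(4*δ) := by
  simp [DDb, Dsder, Ds, pr, Fin.sum_univ_two, EuclideanSpace.single_apply, sq2]
  have h2 : sq2 y ≠ 0 := hy
  rw [sq2] at h2
  have key : a / (y 0 * y 0 + y 1 * y 1) ^ 2 * (2 * y 0) * (2 * y 0)
      + a / (y 0 * y 0 + y 1 * y 1) ^ 2 * (2 * y 1) * (2 * y 1)
      = 4 * (a / (y 0 * y 0 + y 1 * y 1)) := by
    field_simp
    ring
  linarith

lemma contDiffOn_sq2 : ContDiff ℝ 2 sq2 := by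
  have h0 : ContDiff ℝ 2 (fun y : E2 => y 0) := (pr 0).contDiff
  have h1 : ContDiff ℝ 2 (fun y : E2 => y 1) := (pr 1).contDiff
  exact (h0.mul h0).add (h1.mul h1)

lemma contDiffOn_bfun (a δ : ℝ) : ContDiffOn ℝ 2 (bfun a δ) {y : E2 | sq2 y ≠ 0} := by
  intro y hy
  have hy' : sq2 y ≠ 0 := hy
  have hlog : ContDiffAt ℝ 2 Real.log (sq2 y) := Real.contDiffAt_log.mpr hy'
  have h1 : ContDiffAt ℝ 2 (fun y => Real.log (sq2 y)) y :=
    hlog.comp y contDiffOn_sq2.contDiffAt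
  exact (((contDiffAt_const (c := a)).mul h1).sub
    ((contDiffAt_const (c := δ)).mul contDiffOn_sq2.contDiffAt)).contDiffWithinAt

lemma lap_eq (f : E2 → ℝ) (x : E2) :
    lap f x = ∑ i : Fin 2, fderiv ℝ (fderiv ℝ f) x (EuclideanSpace.single i 1)
      (EuclideanSpace.single i 1) := by
  unfold lap
  refine Finset.sum_congr rfl (fun i _ => ?_)
  rw [iteratedFDeriv_two_apply]
  simp

/-- At a local minimum of a C² function, the Laplacian is nonnegative. -/
lemma lap_nonneg (f : E2 → ℝ) (U : Set E2) (hU : IsOpen U) (x : E2) (hx : x ∈ U)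
    (hf : ContDiffOn ℝ 2 f U) (hmin : IsLocalMin f x) : 0 ≤ lap f x := by
  rw [lap_eq]
  exact Finset.sum_nonneg (fun i _ => sdt f U hU x hx hf hmin _)

/-- Laplacian of `ψ + bfun a δ`. -/
lemma lap_add (a δ : ℝ) (ψ : E2 → ℝ) (U : Set E2) (hU : IsOpen U)
    (hUs : ∀ y ∈ U, sq2 y ≠ 0) (hψ : ContDiffOn ℝ 2 ψ U) (x : E2) (hx : x ∈ U) :
    lap (fun y => ψ y + bfun a δ y) x = lap ψ x - 4*δ := by
  have hev : (fun z => fderiv ℝ (fun y => ψ y + bfun a δ y) z)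
      =ᶠ[𝓝 x] (fun z => fderiv ℝ ψ z + Db a δ z) := by
    filter_upwards [hU.mem_nhds hx] with z hz
    have hψz : DifferentiableAt ℝ ψ z :=
      (hψ.contDiffAt (hU.mem_nhds hz)).differentiableAt two_ne_zero
    have hbz := hasFDerivAt_bfun a δ z (hUs z hz)
    exact (hψz.hasFDerivAt.add hbz).fderiv
  have hψ' : HasFDerivAt (fderiv ℝ ψ) (fderiv ℝ (fderiv ℝ ψ) x) x :=
    ((((hψ.contDiffAt (hU.mem_nhds hx)).fderiv_right (m := 1) (le_refl 2))).differentiableAt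
      one_ne_zero).hasFDerivAt
  have hb' := hasFDerivAt_Db a δ x (hUs x hx)
  have h2 : fderiv ℝ (fderiv ℝ (fun y => ψ y + bfun a δ y)) x
      = fderiv ℝ (fderiv ℝ ψ) x + DDb a δ x := by
    rw [hev.fderiv_eq]
    exact (hψ'.add hb').fderiv
  rw [lap_eq, lap_eq, h2]
  simp only [ContinuousLinearMap.add_apply, Finset.sum_add_distrib]
  rw [trace_DDb a δ x (hUs x hx)]
  ring

end Barrier

theorem stmt_2 (r : ℝ) (hr : 0 < r) (ψ : EuclideanSpace ℝ (Fin 2) → ℝ)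
    (hcont : ContinuousOn ψ {x | r ≤ ‖x‖})
    (hreg : ContDiffOn ℝ 2 ψ {x | r < ‖x‖})
    (hbdd : BddBelow (ψ '' {x | r ≤ ‖x‖}))
    (hsup : ∀ x, r < ‖x‖ → lap ψ x ≤ 0) :
    ∃ x₀ : EuclideanSpace ℝ (Fin 2), ‖x₀‖ = r ∧
      ∀ x : EuclideanSpace ℝ (Fin 2), r ≤ ‖x‖ → ψ x₀ ≤ ψ x := by
  obtain ⟨x₀, hx₀S, hx₀min⟩ : ∃ x₀ : E2, ‖x₀‖ = r ∧ ∀ y : E2, ‖y‖ = r → ψ x₀ ≤ ψ y := by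
    have hcpt : IsCompact (Metric.sphere (0:E2) r) := isCompact_sphere 0 r
    have hne : (Metric.sphere (0:E2) r).Nonempty := by
      refine ⟨EuclideanSpace.single 0 r, ?_⟩
      rw [mem_sphere_zero_iff_norm, EuclideanSpace.norm_single]
      exact Real.norm_of_nonneg hr.le
    have hcont' : ContinuousOn ψ (Metric.sphere (0:E2) r) := by
      refine hcont.mono (fun y hy => ?_)
      rw [mem_sphere_zero_iff_norm] at hy
      exact le_of_eq hy.symm
    obtain ⟨x₀, hx₀, hmin⟩ := hcpt.exists_isMinOn hne hcont'
    exact ⟨x₀, mem_sphere_zero_iff_norm.mp hx₀,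
      fun y hy => hmin (mem_sphere_zero_iff_norm.mpr hy)⟩
  refine ⟨x₀, hx₀S, ?_⟩
  set m := ψ x₀ with hm
  obtain ⟨B, hB⟩ := hbdd
  have hBle : ∀ y : E2, r ≤ ‖y‖ → B ≤ ψ y := fun y hy => hB ⟨y, hy, rfl⟩
  have hBm : B ≤ m := hBle x₀ (le_of_eq hx₀S.symm)
  intro x hx
  rcases eq_or_lt_of_le hx with heq | hlt
  · exact hx₀min x heq.symm
  have hx0 : (0:ℝ) < ‖x‖ := lt_trans hr hlt
  have key : ∀ ε > 0, m ≤ ψ x + ε * (Real.log ‖x‖ - Real.log r) := by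
    intro ε hε
    set R := max ‖x‖ (r * Real.exp ((m - B)/ε)) with hRdef
    have hRx : ‖x‖ ≤ R := le_max_left _ _
    have hRr : r < R := lt_of_lt_of_le hlt hRx
    have hRlog : m - B ≤ ε * (Real.log R - Real.log r) := by
      have h1 : r * Real.exp ((m - B)/ε) ≤ R := le_max_right _ _
      have h2 : Real.log (r * Real.exp ((m-B)/ε)) ≤ Real.log R :=
        Real.log_le_log (by positivity) h1
      rw [Real.log_mul (ne_of_gt hr) (Real.exp_ne_zero _), Real.log_exp] at h2
      have h3 : (m-B)/ε ≤ Real.log R - Real.log r := by linarith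
      calc m - B = ε * ((m-B)/ε) := by field_simp
        _ ≤ ε * (Real.log R - Real.log r) := mul_le_mul_of_nonneg_left h3 hε.le
    have keyδ : ∀ δ > 0, m + ε * Real.log r - δ * R^2
        ≤ ψ x + ε * Real.log ‖x‖ - δ * ‖x‖^2 := by
      intro δ hδ
      set a := ε / 2 with hadef
      set W := fun y : E2 => ψ y + bfun a δ y with hWdef
      have hbval : ∀ y : E2, 0 < ‖y‖ → bfun a δ y = ε * Real.log ‖y‖ - δ * ‖y‖^2 := by
        intro y hy
        have : Real.log (sq2 y) = 2 * Real.log ‖y‖ := by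
          rw [sq2_eq_norm, Real.log_pow]
          push_cast; ring
        show a * Real.log (sq2 y) - δ * sq2 y = _
        rw [this, sq2_eq_norm, hadef]
        ring
      set A := {y : E2 | r ≤ ‖y‖ ∧ ‖y‖ ≤ R} with hAdef
      have hsq2pos : ∀ y : E2, r ≤ ‖y‖ → sq2 y ≠ 0 := by
        intro y hy
        rw [sq2_eq_norm]
        have : 0 < ‖y‖ := lt_of_lt_of_le hr hy
        positivity
      have hAc : IsCompact A := by
        have hAeq : A = Metric.closedBall (0:E2) R ∩ {y : E2 | r ≤ ‖y‖} := by
          ext y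
          simp [hAdef, Metric.mem_closedBall, dist_zero_right, and_comm]
        rw [hAeq]
        exact (isCompact_closedBall 0 R).inter_right
          (isClosed_le continuous_const continuous_norm)
      have hxA : x ∈ A := ⟨hx, hRx⟩
      have hWc : ContinuousOn W A := by
        refine ContinuousOn.add (hcont.mono (fun y hy => hy.1)) ?_
        refine ((contDiffOn_bfun a δ).continuousOn).mono (fun y hy => hsq2pos y hy.1)
      obtain ⟨p, hpA, hpmin⟩ := hAc.exists_isMinOn ⟨x, hxA⟩ hWc
      have hpb : ‖p‖ = r ∨ ‖p‖ = R := by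
        by_contra hcon
        push_neg at hcon
        have h1 : r < ‖p‖ := lt_of_le_of_ne hpA.1 (Ne.symm hcon.1)
        have h2 : ‖p‖ < R := lt_of_le_of_ne hpA.2 hcon.2
        have hO : IsOpen {y : E2 | r < ‖y‖ ∧ ‖y‖ < R} :=
          (isOpen_lt continuous_const continuous_norm).inter
            (isOpen_lt continuous_norm continuous_const)
        have hAnhds : A ∈ 𝓝 p :=
          Filter.mem_of_superset (hO.mem_nhds ⟨h1, h2⟩) (fun y hy => ⟨hy.1.le, hy.2.le⟩)
        have hlm : IsLocalMin W p := hpmin.isLocalMin hAnhds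
        have hUo : IsOpen {y : E2 | r < ‖y‖} := isOpen_lt continuous_const continuous_norm
        have hUs : ∀ y ∈ {y : E2 | r < ‖y‖}, sq2 y ≠ 0 := fun y hy => hsq2pos y (le_of_lt hy)
        have hWreg : ContDiffOn ℝ 2 W {y : E2 | r < ‖y‖} :=
          hreg.add ((contDiffOn_bfun a δ).mono hUs)
        have h0 : 0 ≤ lap W p := lap_nonneg W _ hUo p h1 hWreg hlm
        have h1' : lap W p = lap ψ p - 4*δ := lap_add a δ ψ _ hUo hUs hreg p h1
        have h2' := hsup p h1
        rw [h1'] at h0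
        linarith
      have hpval : m + ε * Real.log r - δ * R^2 ≤ W p := by
        rcases hpb with h | h
        · have hp0 : (0:ℝ) < ‖p‖ := by rw [h]; exact hr
          have hmle : m ≤ ψ p := hx₀min p h
          have hbp : bfun a δ p = ε * Real.log r - δ * r^2 := by rw [hbval p hp0, h]
          have hrR : δ * r^2 ≤ δ * R^2 :=
            mul_le_mul_of_nonneg_left (by nlinarith [hr.le, hRr.le]) hδ.le
          have hWp : W p = ψ p + bfun a δ p := rfl
          rw [hWp, hbp]
          linarith
        · have hp0 : (0:ℝ) < ‖p‖ := by rw [h]; linarith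
          have hBp : B ≤ ψ p := hBle p hpA.1
          have hbp : bfun a δ p = ε * Real.log R - δ * R^2 := by rw [hbval p hp0, h]
          have hWp : W p = ψ p + bfun a δ p := rfl
          rw [hWp, hbp]
          linarith
      have hWx : W p ≤ W x := hpmin hxA
      have hWxval : W x = ψ x + ε * Real.log ‖x‖ - δ * ‖x‖^2 := by
        have hWp : W x = ψ x + bfun a δ x := rfl
        rw [hWp, hbval x hx0]
        ring
      rw [hWxval] at hWx
      calc m + ε * Real.log r - δ * R^2 ≤ W p := hpval
        _ ≤ ψ x + ε * Real.log ‖x‖ - δ * ‖x‖^2 := hWx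
    by_contra hcon
    push_neg at hcon
    set K := R^2 - ‖x‖^2 + 1 with hK_def
    have hRx2 : ‖x‖^2 ≤ R^2 := by nlinarith [norm_nonneg x]
    have hK : 0 < K := by linarith
    set c := m - (ψ x + ε*(Real.log ‖x‖ - Real.log r)) with hc_def
    have hc : 0 < c := by linarith
    have hkey := keyδ (c/(2*K)) (by positivity)
    have h2 : c ≤ (c/(2*K)) * (R^2 - ‖x‖^2) := by
      rw [hc_def]
      linarith
    have h3 : (c/(2*K)) * (R^2 - ‖x‖^2) ≤ (c/(2*K)) * K :=
      mul_le_mul_of_nonneg_left (by linarith) (by positivity)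
    have h4 : (c/(2*K)) * K = c/2 := by field_simp
    linarith
  by_contra hcon
  push_neg at hcon
  set L := Real.log ‖x‖ - Real.log r with hL_def
  have hL : 0 ≤ L := by
    have := Real.log_le_log hr hlt.le
    linarith
  set c := m - ψ x with hc_def
  have hc : 0 < c := by linarith
  have hkey := key (c/(2*(L+1))) (by positivity)
  have h3 : (c/(2*(L+1))) * L ≤ (c/(2*(L+1))) * (L+1) :=
    mul_le_mul_of_nonneg_left (by linarith) (by positivity)
  have h4 : (c/(2*(L+1))) * (L+1) = c/2 := by field_simp
  linarith
end

section
/- Let n ≥ 3, ρ₀ > 0, and let v : [ρ₀, ∞) → (0, ∞) be a C² function with v' < 0 on (ρ₀, ∞), satisfying v''(r) + ((n-1)/r)v'(r) ≤ -c₁ v(r)^(n/(n-2)) for all r > ρ₀, with c₁ > 0. Then there exist constants k̃ > 0 and ρ₂ > ρ₀ such that v(r) ≤ k̃ r^(2-n) for all r > ρ₂. -/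
open Real Set
set_option maxHeartbeats 1000000

theorem stmt_6 (n : ℕ) (hn : 3 ≤ n) (ρ₀ c₁ : ℝ) (hρ₀ : 0 < ρ₀) (hc₁ : 0 < c₁)
    (v : ℝ → ℝ) (hv : ContDiffOn ℝ 2 v (Ici ρ₀))
    (hpos : ∀ r, ρ₀ ≤ r → 0 < v r)
    (hdec : ∀ r, ρ₀ < r → deriv v r < 0)
    (hineq : ∀ r, ρ₀ < r →
      deriv (deriv v) r + ((n : ℝ) - 1) / r * deriv v r ≤ -c₁ * v r ^ ((n : ℝ) / ((n : ℝ) - 2))) :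
    ∃ k > 0, ∃ ρ₂ > ρ₀, ∀ r, ρ₂ < r → v r ≤ k * r ^ ((2 : ℝ) - n) := by
  have hn3 : (3:ℝ) ≤ (n:ℝ) := by exact_mod_cast hn
  set p : ℝ := (n:ℝ) / ((n:ℝ) - 2) with hpdef
  have hn2pos : (0:ℝ) < (n:ℝ) - 2 := by linarith
  have hppos : 0 < p := div_pos (by linarith) hn2pos
  -- differentiability infrastructure
  have hvo : ContDiffOn ℝ 2 v (Ioi ρ₀) := hv.mono Ioi_subset_Ici_self
  have hdiff : DifferentiableOn ℝ v (Ioi ρ₀) := hvo.differentiableOn (by norm_num)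
  have hdv : ∀ t ∈ Ioi ρ₀, HasDerivAt v (deriv v t) t := fun t ht =>
    (hdiff.differentiableAt (isOpen_Ioi.mem_nhds ht)).hasDerivAt
  have hc1' : ContDiffOn ℝ 1 (deriv v) (Ioi ρ₀) :=
    hvo.deriv_of_isOpen isOpen_Ioi (by norm_num)
  have hdv2 : ∀ t ∈ Ioi ρ₀, HasDerivAt (deriv v) (deriv (deriv v) t) t := fun t ht =>
    (((hc1'.differentiableOn one_ne_zero).differentiableAt (isOpen_Ioi.mem_nhds ht))).hasDerivAt
  have hcontdv : ContinuousOn (deriv v) (Ioi ρ₀) := hc1'.continuousOn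
  -- v is antitone on Ici ρ₀
  have hanti : AntitoneOn v (Ici ρ₀) := by
    apply StrictAntiOn.antitoneOn
    apply strictAntiOn_of_deriv_neg (convex_Ici ρ₀) hv.continuousOn
    intro x hx
    rw [interior_Ici] at hx
    exact hdec x hx
  -- derivative of w t = t^(n-1) * deriv v t and its bound
  have hwd : ∀ t ∈ Ioi ρ₀, HasDerivAt (fun t => t ^ (n-1) * deriv v t)
      (((n-1:ℕ):ℝ) * t ^ (n-1-1) * deriv v t + t ^ (n-1) * deriv (deriv v) t) t := by
    intro t ht
    exact (hasDerivAt_pow (n-1) t).mul (hdv2 t ht)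
  have hwbound : ∀ t, ρ₀ < t →
      ((n-1:ℕ):ℝ) * t ^ (n-1-1) * deriv v t + t ^ (n-1) * deriv (deriv v) t
        ≤ -c₁ * t ^ (n-1) * v t ^ p := by
    intro t ht
    have ht0 : 0 < t := lt_trans hρ₀ ht
    have key := mul_le_mul_of_nonneg_left (hineq t ht) (le_of_lt (pow_pos ht0 (n-1)))
    have hcast : ((n-1:ℕ):ℝ) = (n:ℝ) - 1 := by
      push_cast [Nat.cast_sub (by omega : 1 ≤ n)]; ring
    have hidx : n - 1 - 1 = n - 2 := by omega
    have e1 : t ^ (n-1) = t * t ^ (n-2) := by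
      have : n - 1 = (n-2) + 1 := by omega
      rw [this, pow_succ']
    have e2 : t ^ (n-1) * (((n:ℝ)-1)/t * deriv v t) = ((n:ℝ)-1) * t ^ (n-2) * deriv v t := by
      rw [e1]; field_simp
    rw [hcast, hidx]
    calc ((n:ℝ)-1) * t ^ (n-2) * deriv v t + t ^ (n-1) * deriv (deriv v) t
        = t ^ (n-1) * (deriv (deriv v) t + ((n:ℝ)-1)/t * deriv v t) := by
          rw [mul_add, e2]; ring
      _ ≤ t ^ (n-1) * (-c₁ * v t ^ p) := key
      _ = -c₁ * t ^ (n-1) * v t ^ p := by ring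
  set s : ℝ := ρ₀ + 1 with hsdef
  have hs : ρ₀ < s := by simp [hsdef]
  have hs0 : 0 < s := lt_trans hρ₀ hs
  -- Step B
  have stepB : ∀ r, s ≤ r → r ^ (n-1) * deriv v r ≤
      s ^ (n-1) * deriv v s - (c₁/(n:ℝ)) * v r ^ p * (r ^ n - s ^ n) := by
    intro r hsr
    set A : ℝ := (c₁/(n:ℝ)) * v r ^ p with hAdef
    have hr0 : ρ₀ < r := lt_of_lt_of_le hs hsr
    have hvr : 0 < v r := hpos r hr0.le
    have hA : 0 ≤ A := by
      apply mul_nonneg (div_nonneg hc₁.le (by linarith)) (rpow_nonneg hvr.le p)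
    set g : ℝ → ℝ := fun t => t ^ (n-1) * deriv v t + A * t ^ n with hgdef
    have hginc : AntitoneOn g (Icc s r) := by
      have hsub : Icc s r ⊆ Ioi ρ₀ := fun x hx => lt_of_lt_of_le hs hx.1
      have hcont : ContinuousOn g (Icc s r) := by
        apply ContinuousOn.add
        · exact ((continuous_pow (n-1)).continuousOn).mul (hcontdv.mono hsub)
        · exact (continuous_const.mul (continuous_pow n)).continuousOn
      have hgD : ∀ x ∈ Ioo s r, HasDerivAt g
          ((((n-1:ℕ):ℝ) * x ^ (n-1-1) * deriv v x + x ^ (n-1) * deriv (deriv v) x)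
            + A * ((n:ℕ) * x ^ (n-1))) x := by
        intro x hx
        have hxo : x ∈ Ioi ρ₀ := lt_trans hs hx.1
        exact (hwd x hxo).add ((hasDerivAt_pow n x).const_mul A)
      apply antitoneOn_of_deriv_nonpos (convex_Icc s r) hcont
      · rw [interior_Icc]
        intro x hx
        exact ((hgD x hx).differentiableAt).differentiableWithinAt
      · rw [interior_Icc]
        intro x hx
        rw [(hgD x hx).deriv]
        have hxo : ρ₀ < x := lt_trans hs hx.1
        have hx0 : 0 < x := lt_trans hρ₀ hxo
        have h1 := hwbound x hxo
        have hvle : v r ≤ v x := hanti (le_of_lt hxo) (le_of_lt hr0) hx.2.le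
        have h2 : v r ^ p ≤ v x ^ p := rpow_le_rpow hvr.le hvle hppos.le
        have hAn : A * (n:ℝ) = c₁ * v r ^ p := by
          rw [hAdef]; field_simp
        have h3 : A * ((n:ℕ) * x ^ (n-1)) = c₁ * v r ^ p * x ^ (n-1) := by
          push_cast
          rw [← mul_assoc, hAn]
        rw [h3]
        have h4 : c₁ * v r ^ p * x ^ (n-1) ≤ c₁ * v x ^ p * x ^ (n-1) := by
          apply mul_le_mul_of_nonneg_right _ (pow_nonneg hx0.le _)
          exact mul_le_mul_of_nonneg_left h2 hc₁.le
        nlinarith [h1, h4]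
    have hle := hginc (left_mem_Icc.mpr hsr) (right_mem_Icc.mpr hsr) hsr
    simp only [hgdef] at hle
    have : r ^ (n-1) * deriv v r + A * r ^ n ≤ s ^ (n-1) * deriv v s + A * s ^ n := hle
    rw [hAdef] at this ⊢
    nlinarith [this]
  -- Step C
  have stepC : ∀ r, 2*s ≤ r → deriv v r ≤ -(c₁/(2*(n:ℝ))) * r * v r ^ p := by
    intro r hr
    have hsr : s ≤ r := by linarith
    have hr0 : ρ₀ < r := lt_of_lt_of_le hs hsr
    have hrpos : 0 < r := lt_trans hρ₀ hr0
    have hvr : 0 < v r := hpos r hr0.le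
    have hB := stepB r hsr
    have hws : s ^ (n-1) * deriv v s ≤ 0 := by
      have := hdec s hs
      nlinarith [pow_pos hs0 (n-1)]
    -- s^n ≤ r^n / 2
    have hsn : s ^ n ≤ r ^ n / 2 := by
      have h1 : s ≤ r / 2 := by linarith
      have h2 : s ^ n ≤ (r/2) ^ n := pow_le_pow_left₀ hs0.le h1 n
      have h3 : (r/2:ℝ) ^ n = r ^ n / 2 ^ n := div_pow r 2 n
      have h4 : (2:ℝ) ≤ 2 ^ n := by
        calc (2:ℝ) = 2 ^ 1 := (pow_one 2).symm
        _ ≤ 2 ^ n := pow_le_pow_right₀ (by norm_num) (by omega)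
      have h5 : r ^ n / 2 ^ n ≤ r ^ n / 2 := by
        apply div_le_div_of_nonneg_left (pow_nonneg hrpos.le n) (by norm_num) h4
      linarith [h2, h3 ▸ h2]
    have hvp : 0 ≤ v r ^ p := rpow_nonneg hvr.le p
    have key : r ^ (n-1) * deriv v r ≤ r ^ (n-1) * (-(c₁/(2*(n:ℝ))) * r * v r ^ p) := by
      have hrn : r ^ (n-1) * r = r ^ n := by
        rw [← pow_succ]
        congr 1
        omega
      have e : r ^ (n-1) * (-(c₁/(2*(n:ℝ))) * r * v r ^ p)
          = -(c₁/(2*(n:ℝ))) * v r ^ p * r ^ n := by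
        rw [← hrn]; ring
      rw [e]
      have hcn : (c₁/(n:ℝ)) * v r ^ p * (r^n - s^n) ≥ (c₁/(2*(n:ℝ))) * v r ^ p * r ^ n := by
        have hfac : r ^ n - s ^ n ≥ r ^ n / 2 := by linarith
        have h6 : (0:ℝ) ≤ (c₁/(n:ℝ)) * v r ^ p :=
          mul_nonneg (div_nonneg hc₁.le (by linarith)) hvp
        have := mul_le_mul_of_nonneg_left hfac h6
        calc (c₁/(2*(n:ℝ))) * v r ^ p * r ^ n
            = (c₁/(n:ℝ)) * v r ^ p * (r ^ n / 2) := by field_simp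
          _ ≤ (c₁/(n:ℝ)) * v r ^ p * (r ^ n - s ^ n) := this
      linarith [hB]
    exact le_of_mul_le_mul_left key (pow_pos hrpos (n-1))
  -- Step D
  set q : ℝ := 2 / ((n:ℝ) - 2) with hqdef
  have hq : 0 < q := div_pos (by norm_num) hn2pos
  have hqp : q + 1 = p := by
    rw [hqdef, hpdef]
    field_simp; ring
  set c : ℝ := q * c₁ / (8 * (n:ℝ)) with hcdef
  have hcpos : 0 < c := by
    apply div_pos (mul_pos hq hc₁) (by linarith)
  set K : ℝ → ℝ := fun t => v t ^ (-q) - (q * c₁ / (4 * (n:ℝ))) * t ^ 2 with hKdef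
  have h2s : ρ₀ < 2 * s := by linarith
  have hKmono : MonotoneOn K (Ici (2*s)) := by
    have hsub : Ici (2*s) ⊆ Ici ρ₀ := fun x hx => le_trans h2s.le hx
    have hcont : ContinuousOn K (Ici (2*s)) := by
      apply ContinuousOn.sub
      · apply ContinuousOn.rpow_const (hv.continuousOn.mono hsub)
        intro x hx
        exact Or.inl (ne_of_gt (hpos x (hsub hx)))
      · exact (continuous_const.mul (continuous_pow 2)).continuousOn
    have hKD : ∀ x ∈ Ioi (2*s), HasDerivAt K
        (deriv v x * (-q) * v x ^ (-q - 1) - (q * c₁ / (4 * (n:ℝ))) * (2 * x)) x := by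
      intro x hx
      have hxo : x ∈ Ioi ρ₀ := lt_trans h2s hx
      have hvx : v x ≠ 0 := ne_of_gt (hpos x (le_of_lt hxo))
      have h1 : HasDerivAt (fun y => v y ^ (-q)) (deriv v x * (-q) * v x ^ (-q - 1)) x :=
        (hdv x hxo).rpow_const (Or.inl hvx)
      have h2 : HasDerivAt (fun y : ℝ => (q * c₁ / (4 * (n:ℝ))) * y ^ 2)
          ((q * c₁ / (4 * (n:ℝ))) * (2 * x)) x := by
        have := (hasDerivAt_pow 2 x).const_mul (q * c₁ / (4 * (n:ℝ)))
        simpa using this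
      exact h1.sub h2
    apply monotoneOn_of_deriv_nonneg (convex_Ici (2*s)) hcont
    · rw [interior_Ici]
      intro x hx
      exact ((hKD x hx).differentiableAt).differentiableWithinAt
    · rw [interior_Ici]
      intro x hx
      rw [(hKD x hx).deriv]
      have hxo : ρ₀ < x := lt_trans h2s hx
      have hx0 : 0 < x := lt_trans hρ₀ hxo
      have hvx : 0 < v x := hpos x hxo.le
      have hC := stepC x (le_of_lt hx)
      have hvneg : (0:ℝ) < v x ^ (-q - 1) := rpow_pos_of_pos hvx _
      have hflip : (-(c₁/(2*(n:ℝ))) * x * v x ^ p) * (-q * v x ^ (-q-1))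
          ≤ deriv v x * (-q * v x ^ (-q-1)) := by
        apply mul_le_mul_of_nonpos_right hC
        nlinarith [hvneg]
      have hcancel : v x ^ p * v x ^ (-q-1) = 1 := by
        rw [← Real.rpow_add hvx]
        have : p + (-q - 1) = 0 := by rw [← hqp]; ring
        rw [this, Real.rpow_zero]
      have hlhs : (-(c₁/(2*(n:ℝ))) * x * v x ^ p) * (-q * v x ^ (-q-1))
          = q * c₁ / (2*(n:ℝ)) * x := by
        have : (-(c₁/(2*(n:ℝ))) * x * v x ^ p) * (-q * v x ^ (-q-1))
            = (c₁/(2*(n:ℝ))) * x * q * (v x ^ p * v x ^ (-q-1)) := by ring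
        rw [this, hcancel]; ring
      have : q * c₁ / (2*(n:ℝ)) * x ≤ deriv v x * (-q) * v x ^ (-q - 1) := by
        rw [← hlhs]
        calc (-(c₁/(2*(n:ℝ))) * x * v x ^ p) * (-q * v x ^ (-q-1))
            ≤ deriv v x * (-q * v x ^ (-q-1)) := hflip
          _ = deriv v x * (-q) * v x ^ (-q-1) := by ring
      have heq : q * c₁ / (4 * (n:ℝ)) * (2 * x) = q * c₁ / (2*(n:ℝ)) * x := by
        field_simp; ring
      linarith [this, heq ▸ le_refl (q * c₁ / (4 * (n:ℝ)) * (2 * x))]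
  -- conclude
  refine ⟨c ^ (-(1/q)), rpow_pos_of_pos hcpos _, 3*s, by linarith, ?_⟩
  intro r hr
  have hrs : 2*s ≤ r := by linarith
  have hr0 : ρ₀ < r := lt_of_lt_of_le h2s hrs
  have hrpos : 0 < r := lt_trans hρ₀ hr0
  have hvr : 0 < v r := hpos r hr0.le
  have hK := hKmono self_mem_Ici (mem_Ici.mpr hrs) hrs
  simp only [hKdef] at hK
  have hK2s : (0:ℝ) ≤ v (2*s) ^ (-q) := rpow_nonneg (hpos (2*s) h2s.le).le _
  have hlow : c * r ^ 2 ≤ v r ^ (-q) := by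
    have h1 : v (2*s) ^ (-q) - (q * c₁ / (4 * (n:ℝ))) * (2*s) ^ 2
        ≤ v r ^ (-q) - (q * c₁ / (4 * (n:ℝ))) * r ^ 2 := hK
    have h2 : (q * c₁ / (4 * (n:ℝ))) * (r ^ 2 - (2*s)^2) ≤ v r ^ (-q) := by
      nlinarith [hK2s]
    have h3 : r ^ 2 - (2*s)^2 ≥ r ^ 2 / 2 := by nlinarith [hs0]
    have h4 : (0:ℝ) ≤ q * c₁ / (4 * (n:ℝ)) := by positivity
    have h5 : c * r ^ 2 = (q * c₁ / (4 * (n:ℝ))) * (r ^ 2 / 2) := by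
      rw [hcdef]; field_simp; ring
    nlinarith [mul_le_mul_of_nonneg_left h3 h4]
  -- from v r ^ (-q) ≥ c r² conclude v r ≤ c^(-1/q) r^(2-n)
  have hcr : (0:ℝ) < c * r ^ 2 := by positivity
  have h6 : (c * r ^ 2) ^ (1/q) ≤ (v r ^ (-q)) ^ (1/q) :=
    rpow_le_rpow hcr.le hlow (by positivity)
  have h7 : (v r ^ (-q)) ^ (1/q) = (v r)⁻¹ := by
    rw [← Real.rpow_mul hvr.le]
    have : -q * (1/q) = -1 := by field_simp
    rw [this, Real.rpow_neg_one]
  rw [h7] at h6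
  have ha : (0:ℝ) < (c * r ^ 2) ^ (1/q) := rpow_pos_of_pos hcr _
  have h8 : (c * r ^ 2) ^ (1/q) * v r ≤ 1 := by
    calc (c * r ^ 2) ^ (1/q) * v r ≤ (v r)⁻¹ * v r :=
          mul_le_mul_of_nonneg_right h6 hvr.le
      _ = 1 := inv_mul_cancel₀ (ne_of_gt hvr)
  have h9 : v r ≤ ((c * r ^ 2) ^ (1/q))⁻¹ := by
    rw [← one_div, le_div_iff₀ ha]
    linarith [h8]
  have h10 : ((c * r ^ 2) ^ (1/q))⁻¹ = c ^ (-(1/q)) * r ^ ((2:ℝ) - n) := by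
    rw [← Real.rpow_neg hcr.le, Real.mul_rpow hcpos.le (by positivity)]
    congr 1
    rw [← Real.rpow_natCast r 2, ← Real.rpow_mul hrpos.le]
    congr 1
    push_cast
    rw [hqdef]
    field_simp; ring
  rw [h10] at h9
  exact h9
end

section
/- Let n ≥ 3 and p ∈ (n/(n-2), (n+2)/(n-2)). Set ε = n/(p+1) - (n-2)/2 > 0 and λ > 0. Suppose W ∈ C¹(ℝ) satisfies W(0) = 0, W'(u) = -λ u^p on [0, β], W' < 0 on (0, b) with b = κβ for some κ > 1, W'(b) = 0, and W'([0,b]) ⊂ [-λμβ^p, 0] for some μ > 1 with κμ < 1 + 2ε/(n-2). Then (n-2)/2 · W'(u)·u - n·W(u) > 0 for all u ∈ (0, b]. -/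
open Real Set

theorem stmt_7 (n : ℕ) (hn : 3 ≤ n) (p lam β κ μ : ℝ)
    (hp : p ∈ Ioo ((n : ℝ) / ((n : ℝ) - 2)) (((n : ℝ) + 2) / ((n : ℝ) - 2)))
    (hlam : 0 < lam) (hβ : 0 < β) (hκ : 1 < κ) (hμ : 1 < μ)
    (b : ℝ) (hb : b = κ * β)
    (ε : ℝ) (hε : ε = (n : ℝ) / (p + 1) - ((n : ℝ) - 2) / 2)
    (hκμ : κ * μ < 1 + 2 * ε / ((n : ℝ) - 2))
    (W : ℝ → ℝ) (hW : ContDiff ℝ 1 W) (hW0 : W 0 = 0)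
    (hW1 : ∀ u ∈ Icc (0 : ℝ) β, deriv W u = -lam * u ^ p)
    (hW2 : ∀ u ∈ Ioo (0 : ℝ) b, deriv W u < 0)
    (hWb : deriv W b = 0)
    (hW3 : ∀ u ∈ Icc (0 : ℝ) b, deriv W u ∈ Icc (-lam * μ * β ^ p) 0) :
    ∀ u ∈ Ioc (0 : ℝ) b, ((n : ℝ) - 2) / 2 * deriv W u * u - n * W u > 0 := by
  intro u hu
  have hn2 : (3:ℝ) ≤ (n:ℝ) := by exact_mod_cast hn
  have hn2' : (0:ℝ) < (n:ℝ) - 2 := by linarith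
  have hp1 : 1 < p := by
    have h1 : (1:ℝ) < (n:ℝ)/((n:ℝ)-2) := (one_lt_div hn2').mpr (by linarith)
    linarith [hp.1]
  have hp1' : (0:ℝ) < p + 1 := by linarith
  have hεpos : 0 < ε := by
    rw [hε, sub_pos, div_lt_div_iff₀ (by norm_num) hp1']
    have h2 := (lt_div_iff₀ hn2').mp hp.2
    nlinarith
  have hβb : β < b := by
    rw [hb]; nlinarith
  -- the explicit formula on [0, β]
  set g : ℝ → ℝ := fun u => -(lam/(p+1)) * u ^ (p+1) with hg_def
  have hgd : ∀ x : ℝ, HasDerivAt g (-lam * x ^ p) x := by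
    intro x
    have h := (Real.hasDerivAt_rpow_const (x := x) (p := p+1)
      (Or.inr (by linarith))).const_mul (-(lam/(p+1)))
    refine h.congr_deriv ?_
    rw [add_sub_cancel_right]
    field_simp
  have key : ∀ y ∈ Icc (0:ℝ) β, W y = g y := by
    apply eq_of_has_deriv_right_eq (f' := fun x => -lam * x ^ p)
    · intro x hx
      have h := (hW.differentiable (by norm_num)).differentiableAt (x := x) |>.hasDerivAt
      rw [hW1 x ⟨hx.1, hx.2.le⟩] at h
      exact h.hasDerivWithinAt
    · intro x hx
      exact (hgd x).hasDerivWithinAt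
    · exact hW.continuous.continuousOn
    · exact (continuous_const.mul
        (Real.continuous_rpow_const (by positivity))).continuousOn
    · simp [hg_def, hW0, Real.zero_rpow (by positivity : p + 1 ≠ 0)]
  have hanti : StrictAntiOn W (Icc (0:ℝ) b) := by
    apply strictAntiOn_of_deriv_neg (convex_Icc 0 b) hW.continuous.continuousOn
    rw [interior_Icc]; exact hW2
  rcases le_or_gt u β with hcase | hcase
  · -- u ∈ (0, β]
    have hu0 : 0 < u := hu.1
    have hWu : W u = -(lam/(p+1)) * u ^ (p+1) := key u ⟨hu0.le, hcase⟩
    have hdu : deriv W u = -lam * u ^ p := hW1 u ⟨hu0.le, hcase⟩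
    have hrw : u ^ (p+1) = u ^ p * u := by
      rw [Real.rpow_add_one hu0.ne']
    have hupos : 0 < u ^ p := Real.rpow_pos_of_pos hu0 p
    have heq : ((n : ℝ) - 2) / 2 * deriv W u * u - n * W u
        = (lam * u ^ p * u) * ((n:ℝ)/(p+1) - ((n:ℝ)-2)/2) := by
      rw [hWu, hdu, hrw]
      field_simp
      ring
    rw [heq, ← hε]
    positivity
  · -- β < u ≤ b
    have hu0 : 0 < u := hu.1
    have hWβ : W β = -(lam/(p+1)) * β ^ (p+1) := key β ⟨hβ.le, le_rfl⟩
    have hWuβ : W u < W β :=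
      hanti ⟨hβ.le, hβb.le⟩ ⟨hu0.le, hu.2⟩ hcase
    have hd := hW3 u ⟨hu0.le, hu.2⟩
    have hβp : 0 < β ^ p := Real.rpow_pos_of_pos hβ p
    have e1 : (-(lam*μ*β^p)) * b ≤ deriv W u * u := by
      calc (-(lam*μ*β^p)) * b ≤ (-(lam*μ*β^p)) * u := by
            exact mul_le_mul_of_nonpos_left hu.2
              (neg_nonpos.mpr (by positivity))
        _ ≤ deriv W u * u := by
            apply mul_le_mul_of_nonneg_right _ hu0.le
            have := hd.1
            linarith [hd.1]
    have hrwβ : β ^ (p+1) = β ^ p * β := by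
      rw [Real.rpow_add_one hβ.ne']
    have e2 : ((n:ℝ)-2)/2 * ((-(lam*μ*β^p)) * b) ≤ ((n:ℝ)-2)/2 * (deriv W u * u) :=
      mul_le_mul_of_nonneg_left e1 (by linarith)
    have e3 : (n:ℝ) * W u < (n:ℝ) * W β :=
      mul_lt_mul_of_pos_left hWuβ (by linarith)
    have h5 : ((n:ℝ)-2)/2 * (κ*μ) < (n:ℝ)/(p+1) := by
      have hid : ((n:ℝ)-2)/2 * (1 + 2*ε/((n:ℝ)-2)) = ((n:ℝ)-2)/2 + ε := by
        field_simp
      have h6 : ((n:ℝ)-2)/2 * (κ*μ) < ((n:ℝ)-2)/2 * (1 + 2*ε/((n:ℝ)-2)) :=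
        mul_lt_mul_of_pos_left hκμ (by linarith)
      rw [hid] at h6
      rw [hε] at *
      linarith
    have e4 : 0 ≤ ((n:ℝ)-2)/2 * ((-(lam*μ*β^p)) * b) - (n:ℝ) * W β := by
      rw [hWβ, hb, hrwβ]
      have heq2 : ((n:ℝ)-2)/2 * ((-(lam*μ*β^p)) * (κ*β)) - (n:ℝ) * (-(lam/(p+1)) * (β^p*β))
          = (lam * (β^p*β)) * ((n:ℝ)/(p+1) - ((n:ℝ)-2)/2*(κ*μ)) := by
        field_simp; ring
      rw [heq2]
      exact mul_nonneg (by positivity) (by linarith)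
    have : ((n : ℝ) - 2) / 2 * deriv W u * u = ((n:ℝ)-2)/2 * (deriv W u * u) := by ring
    rw [this]
    linarith
end

section
/- Let n = 3 and for integers k ≥ 2, set μ_k = c₃ k^(-2)(log k)^(-2) with c₃ > 0, ξ_{j,k} = (cos(2πj/k), sin(2πj/k), 0) for 1 ≤ j ≤ k, U(x) = (2/(1+|x|²))^(1/2), and v_k(x) = U(x) - Σ_{j=1}^k μ_k^(-1/2) U(μ_k^(-1)(x - ξ_{j,k})). Then there exist r̄ > 0 and k̄ such that v_k(x) > (2/3) U(x) > 0 whenever |x| > r̄ and k ≥ k̄. -/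
open Real MeasureTheory Filter Set

lemma aux_h3 (m d : ℝ) (hm : 0 < m) (hd : 0 < d) :
    (Real.sqrt m)⁻¹ * (Real.sqrt 2 / (m⁻¹ * d)) = Real.sqrt 2 * Real.sqrt m / d := by
  have hsm : 0 < Real.sqrt m := Real.sqrt_pos.mpr hm
  have hmss : Real.sqrt m * Real.sqrt m = m := Real.mul_self_sqrt hm.le
  field_simp
  first
  | linear_combination (Real.sqrt 2 * d) * hmss
  | linear_combination (-1 : ℝ) * hmss

set_option maxHeartbeats 1000000 in
theorem stmt_11 (c₃ : ℝ) (hc₃ : 0 < c₃)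
    (U : EuclideanSpace ℝ (Fin 3) → ℝ)
    (hU : ∀ x, U x = (2 / (1 + ‖x‖ ^ 2)) ^ ((1 : ℝ) / 2))
    (μ : ℕ → ℝ) (hμ : ∀ k : ℕ, μ k = c₃ * (k : ℝ) ^ (-(2 : ℝ)) * (Real.log k) ^ (-(2 : ℝ)))
    (ξ : ℕ → ℕ → EuclideanSpace ℝ (Fin 3))
    (hξ : ∀ j k : ℕ, ξ j k = (EuclideanSpace.equiv (Fin 3) ℝ).symm
      ![Real.cos (2 * π * j / k), Real.sin (2 * π * j / k), 0])
    (v : ℕ → EuclideanSpace ℝ (Fin 3) → ℝ)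
    (hv : ∀ (k : ℕ) x, v k x =
      U x - ∑ j ∈ Finset.Icc 1 k, (μ k) ^ (-(1 : ℝ) / 2) * U ((μ k)⁻¹ • (x - ξ j k))) :
    ∃ rbar > (0 : ℝ), ∃ kbar : ℕ, 2 ≤ kbar ∧ ∀ k ≥ kbar, ∀ x, rbar < ‖x‖ →
      (2 / 3) * U x < v k x ∧ 0 < (2 / 3) * U x := by
  -- U as a square root, and positivity of U
  have hUsqrt : ∀ x : EuclideanSpace ℝ (Fin 3), U x = Real.sqrt (2 / (1 + ‖x‖ ^ 2)) := by
    intro x; rw [hU, Real.sqrt_eq_rpow]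
  have hUpos : ∀ x : EuclideanSpace ℝ (Fin 3), 0 < U x := by
    intro x
    rw [hUsqrt]
    apply Real.sqrt_pos.mpr
    positivity
  set a := 8 * Real.sqrt 2 * Real.sqrt c₃ with ha
  have ha0 : 0 < a := by positivity
  refine ⟨2, by norm_num, max 2 (⌈Real.exp a⌉₊ + 1), le_max_left _ _, ?_⟩
  intro k hk x hx
  have hr1 : (2:ℝ) < ‖x‖ := hx
  have hrpos : (0:ℝ) < ‖x‖ := by linarith
  have hk2 : 2 ≤ k := le_trans (le_max_left _ _) hk
  have hkpos : (0:ℝ) < (k:ℝ) := by exact_mod_cast lt_of_lt_of_le (by norm_num) hk2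
  have hek : Real.exp a ≤ (k:ℝ) := by
    have h1 : Real.exp a ≤ (⌈Real.exp a⌉₊ : ℝ) := Nat.le_ceil _
    have h2 : (⌈Real.exp a⌉₊ + 1 : ℕ) ≤ k := le_trans (le_max_right _ _) hk
    have h3 : ((⌈Real.exp a⌉₊ : ℝ)) ≤ (k:ℝ) := by
      exact_mod_cast le_trans (Nat.le_succ _) h2
    linarith
  have hlog : a ≤ Real.log k := (Real.le_log_iff_exp_le hkpos).mpr hek
  have hlogpos : 0 < Real.log k := lt_of_lt_of_le ha0 hlog
  have hμpos : 0 < μ k := by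
    rw [hμ]
    exact mul_pos (mul_pos hc₃ (Real.rpow_pos_of_pos hkpos _))
      (Real.rpow_pos_of_pos hlogpos _)
  -- square root of μ k
  have hμsq : μ k = (Real.sqrt c₃ / ((k:ℝ) * Real.log k)) ^ 2 := by
    rw [hμ, Real.rpow_neg hkpos.le, Real.rpow_neg hlogpos.le, Real.rpow_two, Real.rpow_two,
      div_pow, Real.sq_sqrt hc₃.le, mul_pow]
    field_simp
  have hsqrtμ : Real.sqrt (μ k) = Real.sqrt c₃ / ((k:ℝ) * Real.log k) := by
    rw [hμsq, Real.sqrt_sq (by positivity)]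
  have hsqrtμpos : 0 < Real.sqrt (μ k) := Real.sqrt_pos.mpr hμpos
  have hμrpow : (μ k) ^ (-(1 : ℝ) / 2) = (Real.sqrt (μ k))⁻¹ := by
    have he : (-(1:ℝ)/2) = -(1/2 : ℝ) := by norm_num
    rw [he, Real.rpow_neg hμpos.le, Real.sqrt_eq_rpow]
  -- lower bound for U x
  have hUlow : 1 / ‖x‖ ≤ U x := by
    rw [hUsqrt]
    have h1 : (1 / ‖x‖) ^ 2 ≤ 2 / (1 + ‖x‖ ^ 2) := by
      rw [div_pow, one_pow, div_le_div_iff₀ (by positivity) (by positivity)]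
      nlinarith
    calc 1 / ‖x‖ = Real.sqrt ((1 / ‖x‖) ^ 2) := (Real.sqrt_sq (by positivity)).symm
      _ ≤ Real.sqrt (2 / (1 + ‖x‖ ^ 2)) := Real.sqrt_le_sqrt h1
  -- per-term bound
  set B : ℝ := 2 * Real.sqrt 2 * Real.sqrt (μ k) / ‖x‖ with hB
  have hterm : ∀ j ∈ Finset.Icc 1 k,
      (μ k) ^ (-(1 : ℝ) / 2) * U ((μ k)⁻¹ • (x - ξ j k)) ≤ B := by
    intro j _
    have hξnorm : ‖ξ j k‖ = 1 := by
      rw [hξ, EuclideanSpace.norm_eq]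
      simp [Fin.sum_univ_three, Real.norm_eq_abs, sq_abs]
    have hsub : ‖x‖ / 2 ≤ ‖x - ξ j k‖ := by
      have := norm_sub_norm_le x (ξ j k)
      rw [hξnorm] at this
      linarith
    have hsubpos : 0 < ‖x - ξ j k‖ := lt_of_lt_of_le (by linarith) hsub
    set y := (μ k)⁻¹ • (x - ξ j k) with hy
    have hynorm : ‖y‖ = (μ k)⁻¹ * ‖x - ξ j k‖ := by
      rw [hy, norm_smul, Real.norm_eq_abs, abs_of_pos (inv_pos.mpr hμpos)]
    have hypos : 0 < ‖y‖ := by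
      rw [hynorm]; positivity
    -- U y ≤ √2 / ‖y‖
    have hUup : U y ≤ Real.sqrt 2 / ‖y‖ := by
      rw [hUsqrt]
      have h1 : 2 / (1 + ‖y‖ ^ 2) ≤ 2 / ‖y‖ ^ 2 := by
        apply div_le_div_of_nonneg_left (by norm_num) (by positivity)
        nlinarith
      calc Real.sqrt (2 / (1 + ‖y‖ ^ 2)) ≤ Real.sqrt (2 / ‖y‖ ^ 2) := Real.sqrt_le_sqrt h1
        _ = Real.sqrt 2 / ‖y‖ := by
            rw [Real.sqrt_div (by norm_num : (0:ℝ) ≤ 2), Real.sqrt_sq hypos.le]  -- note ‖y‖ > 0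
    have h2 : (μ k) ^ (-(1 : ℝ) / 2) * U y ≤ (Real.sqrt (μ k))⁻¹ * (Real.sqrt 2 / ‖y‖) := by
      rw [hμrpow]
      exact mul_le_mul_of_nonneg_left hUup (by positivity)
    have h3 : (Real.sqrt (μ k))⁻¹ * (Real.sqrt 2 / ‖y‖)
        = Real.sqrt 2 * Real.sqrt (μ k) / ‖x - ξ j k‖ := by
      rw [hynorm]
      exact aux_h3 (μ k) _ hμpos hsubpos
    have h4 : Real.sqrt 2 * Real.sqrt (μ k) / ‖x - ξ j k‖ ≤ B := by
      rw [hB, div_le_div_iff₀ hsubpos hrpos]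
      nlinarith [mul_nonneg (mul_nonneg (Real.sqrt_nonneg 2) hsqrtμpos.le)
        (by linarith : (0:ℝ) ≤ 2 * ‖x - ξ j k‖ - ‖x‖)]
    calc (μ k) ^ (-(1 : ℝ) / 2) * U y ≤ (Real.sqrt (μ k))⁻¹ * (Real.sqrt 2 / ‖y‖) := h2
      _ = Real.sqrt 2 * Real.sqrt (μ k) / ‖x - ξ j k‖ := h3
      _ ≤ B := h4
  -- sum bound
  have hsum : ∑ j ∈ Finset.Icc 1 k, (μ k) ^ (-(1 : ℝ) / 2) * U ((μ k)⁻¹ • (x - ξ j k))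
      ≤ (k:ℝ) * B := by
    have h := Finset.sum_le_card_nsmul (Finset.Icc 1 k) _ B hterm
    simpa [Nat.card_Icc, nsmul_eq_mul] using h
  have hkBeq : (k:ℝ) * B = (2 * Real.sqrt 2 * Real.sqrt c₃ / Real.log k) * (1 / ‖x‖) := by
    rw [hB, hsqrtμ]
    field_simp
  have hkey : 2 * Real.sqrt 2 * Real.sqrt c₃ / Real.log k ≤ 1 / 4 := by
    rw [div_le_iff₀ hlogpos]
    nlinarith [hlog]
  have hkB : (k:ℝ) * B ≤ (1/4) * U x := by
    rw [hkBeq]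
    calc 2 * Real.sqrt 2 * Real.sqrt c₃ / Real.log k * (1 / ‖x‖)
        ≤ (1/4) * (1 / ‖x‖) := by
          apply mul_le_mul_of_nonneg_right hkey (by positivity)
      _ ≤ (1/4) * U x := by
          apply mul_le_mul_of_nonneg_left hUlow (by norm_num)
  have hS : ∑ j ∈ Finset.Icc 1 k, (μ k) ^ (-(1 : ℝ) / 2) * U ((μ k)⁻¹ • (x - ξ j k))
      ≤ (1/4) * U x := le_trans hsum hkB
  refine ⟨?_, mul_pos (by norm_num) (hUpos x)⟩
  rw [hv]
  have := hUpos x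
  linarith
end
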